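/- Let n ≥ 1 and let t ∈ ℤ/nℤ be such that either t = 1, or both t and t − 1 are units of ℤ/nℤ. Then the number of solutions over ℤ/nℤ of the Alexander quandle coloring system of the connected sum of two Hopf links equals the number of solutions over ℤ/nℤ of the Alexander quandle coloring system of the Allen–Swenberg link (being n³ in the first case and n in the second). Hence the Alexander quandle, including the involutory case t = ±1 with t − 1 a unit or t = 1, cannot distinguish the connected sum of two Hopf links from the Allen–Swenberg link. -/
import Mathlib



/-- The Alexander quandle coloring system of the connected sum of two Hopf links over
a commutative ring `R` with parameter `t`, as a predicate on `x : Fin 4 → R`. -/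
def HopfSumSystem {R : Type*} [CommRing R] (t : R) (x : Fin 4 → R) : Prop :=
  x 1 = t * x 2 + (1 - t) * x 0 ∧
    x 2 = t * x 1 + (1 - t) * x 3 ∧
    x 0 = t * x 0 + (1 - t) * x 2 ∧
    x 3 = t * x 3 + (1 - t) * x 2

/-- The Alexander quandle coloring system of the Allen–Swenberg link over a
commutative ring `R` with parameter `t`, as a predicate on `x : Fin 45 → R`
(`x i` is the color of arc `xᵢ₊₁`). -/
def AllenSwenbergSystem {R : Type*} [CommRing R] (t : R) (x : Fin 45 → R) : Prop :=
  x 1 = t * x 0 + (1 - t) * x 25 ∧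
    x 25 = t * x 26 + (1 - t) * x 0 ∧
    x 0 = t * x 1 + (1 - t) * x 2 ∧
    x 2 = t * x 3 + (1 - t) * x 0 ∧
    x 3 = t * x 4 + (1 - t) * x 2 ∧
    x 4 = t * x 5 + (1 - t) * x 6 ∧
    x 7 = t * x 6 + (1 - t) * x 5 ∧
    x 28 = t * x 27 + (1 - t) * x 5 ∧
    x 2 = t * x 5 + (1 - t) * x 27 ∧
    x 8 = t * x 7 + (1 - t) * x 6 ∧
    x 6 = t * x 9 + (1 - t) * x 8 ∧
    x 10 = t * x 8 + (1 - t) * x 9 ∧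
    x 9 = t * x 11 + (1 - t) * x 10 ∧
    x 12 = t * x 10 + (1 - t) * x 11 ∧
    x 11 = t * x 13 + (1 - t) * x 12 ∧
    x 18 = t * x 14 + (1 - t) * x 13 ∧
    x 21 = t * x 14 + (1 - t) * x 12 ∧
    x 19 = t * x 15 + (1 - t) * x 13 ∧
    x 20 = t * x 15 + (1 - t) * x 12 ∧
    x 13 = t * x 16 + (1 - t) * x 20 ∧
    x 12 = t * x 17 + (1 - t) * x 20 ∧
    x 19 = t * x 16 + (1 - t) * x 21 ∧
    x 18 = t * x 17 + (1 - t) * x 21 ∧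
    x 20 = t * x 22 + (1 - t) * x 19 ∧
    x 21 = t * x 23 + (1 - t) * x 19 ∧
    x 25 = t * x 22 + (1 - t) * x 18 ∧
    x 24 = t * x 23 + (1 - t) * x 18 ∧
    x 29 = t * x 27 + (1 - t) * x 28 ∧
    x 28 = t * x 30 + (1 - t) * x 29 ∧
    x 31 = t * x 29 + (1 - t) * x 30 ∧
    x 30 = t * x 32 + (1 - t) * x 31 ∧
    x 33 = t * x 31 + (1 - t) * x 32 ∧
    x 32 = t * x 34 + (1 - t) * x 33 ∧
    x 39 = t * x 35 + (1 - t) * x 34 ∧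
    x 37 = t * x 35 + (1 - t) * x 33 ∧
    x 40 = t * x 36 + (1 - t) * x 34 ∧
    x 38 = t * x 36 + (1 - t) * x 33 ∧
    x 34 = t * x 41 + (1 - t) * x 38 ∧
    x 33 = t * x 42 + (1 - t) * x 38 ∧
    x 40 = t * x 41 + (1 - t) * x 37 ∧
    x 39 = t * x 42 + (1 - t) * x 37 ∧
    x 24 = t * x 43 + (1 - t) * x 39 ∧
    x 38 = t * x 43 + (1 - t) * x 40 ∧
    x 26 = t * x 44 + (1 - t) * x 39 ∧
    x 37 = t * x 44 + (1 - t) * x 40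

private lemma asw_ncard_range_eq {α β : Type*} (f : α → β) (hf : Function.Injective f) :
    (Set.range f).ncard = Nat.card α := by
  rw [← Set.image_univ, Set.ncard_image_of_injective _ hf, Set.ncard_univ]

private lemma asw_cancel {R : Type*} [CommRing R] {t s d : R} (hu : IsUnit t)
    (hv : IsUnit s) (A B : ℕ) (h : d * (t ^ A * s ^ B) = 0) : d = 0 :=
  (((hu.pow A).mul (hv.pow B)).mul_left_eq_zero).mp h

set_option maxHeartbeats 1000000 in
set_option maxRecDepth 8000 in
/-- Over `ℤ/nℤ` with `n ≥ 1`, if either `t = 1` or both `t` and `t − 1` are units,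
then the Alexander quandle counting invariants of the connected sum of two Hopf links
and of the Allen–Swenberg link coincide (being `n³` in the first case and `n` in the
second); hence the Alexander quandle, including the involutory cases, cannot
distinguish the two links. -/
theorem hopf_sum_allen_swenberg_indistinguishable (n : ℕ) (hn : 1 ≤ n) (t : ZMod n)
    (ht : t = 1 ∨ (IsUnit t ∧ IsUnit (t - 1))) :
    {x : Fin 4 → ZMod n | HopfSumSystem t x}.ncard =
      {x : Fin 45 → ZMod n | AllenSwenbergSystem t x}.ncard ∧
    (t = 1 → {x : Fin 4 → ZMod n | HopfSumSystem t x}.ncard = n ^ 3) ∧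
    (IsUnit t ∧ IsUnit (t - 1) →
      {x : Fin 4 → ZMod n | HopfSumSystem t x}.ncard = n) := by
  have hnz : NeZero n := ⟨by omega⟩
  rcases ht with rfl | ⟨hu, hv⟩
  · -- case t = 1
    have hc4 : {x : Fin 4 → ZMod n | HopfSumSystem (1 : ZMod n) x}.ncard = n ^ 3 := by
      have hset : {x : Fin 4 → ZMod n | HopfSumSystem (1 : ZMod n) x}
          = Set.range (fun p : ZMod n × ZMod n × ZMod n => fun i : Fin 4 =>
              if (i : ℕ) = 0 then p.1 else if (i : ℕ) ≤ 2 then p.2.1 else p.2.2) := by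
        ext x
        simp only [Set.mem_setOf_eq, Set.mem_range, HopfSumSystem]
        constructor
        · rintro ⟨h1, h2, h3, h4⟩
          refine ⟨⟨x 0, x 1, x 3⟩, funext fun i => ?_⟩
          fin_cases i
          · rfl
          · rfl
          · show x 1 = x 2; linear_combination h1
          · rfl
        · rintro ⟨⟨a, b, c⟩, rfl⟩
          exact ⟨show b = 1 * b + (1 - 1) * a by ring, show b = 1 * b + (1 - 1) * c by ring,
            show a = 1 * a + (1 - 1) * b by ring, show c = 1 * c + (1 - 1) * b by ring⟩
      have hinj : Function.Injective (fun p : ZMod n × ZMod n × ZMod n => fun i : Fin 4 =>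
          if (i : ℕ) = 0 then p.1 else if (i : ℕ) ≤ 2 then p.2.1 else p.2.2) := by
        intro p q h
        have h0 : p.1 = q.1 := congrFun h 0
        have h1 : p.2.1 = q.2.1 := congrFun h 1
        have h3 : p.2.2 = q.2.2 := congrFun h 3
        exact Prod.ext h0 (Prod.ext h1 h3)
      rw [hset, asw_ncard_range_eq _ hinj, Nat.card_prod, Nat.card_prod, Nat.card_zmod]
      ring
    have hc45 : {x : Fin 45 → ZMod n | AllenSwenbergSystem (1 : ZMod n) x}.ncard = n ^ 3 := by
      have hset : {x : Fin 45 → ZMod n | AllenSwenbergSystem (1 : ZMod n) x}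
          = Set.range (fun p : ZMod n × ZMod n × ZMod n => fun i : Fin 45 =>
              if (i : ℕ) < 2 then p.1 else if (i : ℕ) < 6 then p.2.1 else p.2.2) := by
        ext x
        simp only [Set.mem_setOf_eq, Set.mem_range, AllenSwenbergSystem]
        constructor
        · rintro ⟨h1, h2, h3, h4, h5, h6, h7, h8, h9, h10, h11, h12, h13, h14, h15, h16, h17, h18, h19, h20, h21, h22, h23, h24, h25, h26, h27, h28, h29, h30, h31, h32, h33, h34, h35, h36, h37, h38, h39, h40, h41, h42, h43, h44, h45⟩
          have f1 : x 1 = x 0 := by linear_combination h1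
          have f3 : x 3 = x 2 := by linear_combination -h4
          have f4 : x 4 = x 2 := by linear_combination -h5 - h4
          have f5 : x 5 = x 2 := by linear_combination -h9
          have f7 : x 7 = x 6 := by linear_combination h7
          have f8 : x 8 = x 6 := by linear_combination h10 + h7
          have f9 : x 9 = x 6 := by linear_combination -h11
          have f10 : x 10 = x 6 := by linear_combination h12 + h10 + h7
          have f11 : x 11 = x 6 := by linear_combination -h13 - h11
          have f12 : x 12 = x 6 := by linear_combination h14 + h12 + h10 + h7
          have f13 : x 13 = x 6 := by linear_combination -h15 - h13 - h11
          have f14 : x 14 = x 6 := by linear_combination -h16 + h23 - h21 + h14 + h12 + h10 + h7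
          have f15 : x 15 = x 6 := by linear_combination -h18 + h22 - h20 - h15 - h13 - h11
          have f16 : x 16 = x 6 := by linear_combination -h20 - h15 - h13 - h11
          have f17 : x 17 = x 6 := by linear_combination -h21 + h14 + h12 + h10 + h7
          have f18 : x 18 = x 6 := by linear_combination h23 - h21 + h14 + h12 + h10 + h7
          have f19 : x 19 = x 6 := by linear_combination h22 - h20 - h15 - h13 - h11
          have f20 : x 20 = x 6 := by linear_combination h19 - h18 + h22 - h20 - h15 - h13 - h11
          have f21 : x 21 = x 6 := by linear_combination h17 - h16 + h23 - h21 + h14 + h12 + h10 + h7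
          have f22 : x 22 = x 6 := by linear_combination -h24 + h19 - h18 + h22 - h20 - h15 - h13 - h11
          have f23 : x 23 = x 6 := by linear_combination -h25 + h17 - h16 + h23 - h21 + h14 + h12 + h10 + h7
          have f24 : x 24 = x 6 := by linear_combination h27 - h25 + h17 - h16 + h23 - h21 + h14 + h12 + h10 + h7
          have f25 : x 25 = x 6 := by linear_combination h26 - h24 + h19 - h18 + h22 - h20 - h15 - h13 - h11
          have f26 : x 26 = x 6 := by linear_combination -h2 + h26 - h24 + h19 - h18 + h22 - h20 - h15 - h13 - h11
          have f27 : x 27 = x 6 := by linear_combination -h28 - h30 - h32 + h39 - h41 + h34 - h35 + h45 - h44 - h2 + h26 - h24 + h19 - h18 + h22 - h20 - h15 - h13 - h11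
          have f28 : x 28 = x 6 := by linear_combination h29 + h31 + h33 + h38 - h40 + h36 - h37 + h43 - h42 + h27 - h25 + h17 - h16 + h23 - h21 + h14 + h12 + h10 + h7
          have f29 : x 29 = x 6 := by linear_combination -h30 - h32 + h39 - h41 + h34 - h35 + h45 - h44 - h2 + h26 - h24 + h19 - h18 + h22 - h20 - h15 - h13 - h11
          have f30 : x 30 = x 6 := by linear_combination h31 + h33 + h38 - h40 + h36 - h37 + h43 - h42 + h27 - h25 + h17 - h16 + h23 - h21 + h14 + h12 + h10 + h7
          have f31 : x 31 = x 6 := by linear_combination -h32 + h39 - h41 + h34 - h35 + h45 - h44 - h2 + h26 - h24 + h19 - h18 + h22 - h20 - h15 - h13 - h11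
          have f32 : x 32 = x 6 := by linear_combination h33 + h38 - h40 + h36 - h37 + h43 - h42 + h27 - h25 + h17 - h16 + h23 - h21 + h14 + h12 + h10 + h7
          have f33 : x 33 = x 6 := by linear_combination h39 - h41 + h34 - h35 + h45 - h44 - h2 + h26 - h24 + h19 - h18 + h22 - h20 - h15 - h13 - h11
          have f34 : x 34 = x 6 := by linear_combination h38 - h40 + h36 - h37 + h43 - h42 + h27 - h25 + h17 - h16 + h23 - h21 + h14 + h12 + h10 + h7
          have f35 : x 35 = x 6 := by linear_combination -h35 + h45 - h44 - h2 + h26 - h24 + h19 - h18 + h22 - h20 - h15 - h13 - h11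
          have f36 : x 36 = x 6 := by linear_combination -h37 + h43 - h42 + h27 - h25 + h17 - h16 + h23 - h21 + h14 + h12 + h10 + h7
          have f37 : x 37 = x 6 := by linear_combination h45 - h44 - h2 + h26 - h24 + h19 - h18 + h22 - h20 - h15 - h13 - h11
          have f38 : x 38 = x 6 := by linear_combination h43 - h42 + h27 - h25 + h17 - h16 + h23 - h21 + h14 + h12 + h10 + h7
          have f39 : x 39 = x 6 := by linear_combination h34 - h35 + h45 - h44 - h2 + h26 - h24 + h19 - h18 + h22 - h20 - h15 - h13 - h11
          have f40 : x 40 = x 6 := by linear_combination h36 - h37 + h43 - h42 + h27 - h25 + h17 - h16 + h23 - h21 + h14 + h12 + h10 + h7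
          have f41 : x 41 = x 6 := by linear_combination -h40 + h36 - h37 + h43 - h42 + h27 - h25 + h17 - h16 + h23 - h21 + h14 + h12 + h10 + h7
          have f42 : x 42 = x 6 := by linear_combination -h41 + h34 - h35 + h45 - h44 - h2 + h26 - h24 + h19 - h18 + h22 - h20 - h15 - h13 - h11
          have f43 : x 43 = x 6 := by linear_combination -h42 + h27 - h25 + h17 - h16 + h23 - h21 + h14 + h12 + h10 + h7
          have f44 : x 44 = x 6 := by linear_combination -h44 - h2 + h26 - h24 + h19 - h18 + h22 - h20 - h15 - h13 - h11
          refine ⟨⟨x 0, x 2, x 6⟩, funext fun i => ?_⟩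
          fin_cases i
          · rfl
          · show x 0 = x 1; exact f1.symm
          · rfl
          · show x 2 = x 3; exact f3.symm
          · show x 2 = x 4; exact f4.symm
          · show x 2 = x 5; exact f5.symm
          · rfl
          · show x 6 = x 7; exact f7.symm
          · show x 6 = x 8; exact f8.symm
          · show x 6 = x 9; exact f9.symm
          · show x 6 = x 10; exact f10.symm
          · show x 6 = x 11; exact f11.symm
          · show x 6 = x 12; exact f12.symm
          · show x 6 = x 13; exact f13.symm
          · show x 6 = x 14; exact f14.symm
          · show x 6 = x 15; exact f15.symm
          · show x 6 = x 16; exact f16.symm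
          · show x 6 = x 17; exact f17.symm
          · show x 6 = x 18; exact f18.symm
          · show x 6 = x 19; exact f19.symm
          · show x 6 = x 20; exact f20.symm
          · show x 6 = x 21; exact f21.symm
          · show x 6 = x 22; exact f22.symm
          · show x 6 = x 23; exact f23.symm
          · show x 6 = x 24; exact f24.symm
          · show x 6 = x 25; exact f25.symm
          · show x 6 = x 26; exact f26.symm
          · show x 6 = x 27; exact f27.symm
          · show x 6 = x 28; exact f28.symm
          · show x 6 = x 29; exact f29.symm
          · show x 6 = x 30; exact f30.symm
          · show x 6 = x 31; exact f31.symm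
          · show x 6 = x 32; exact f32.symm
          · show x 6 = x 33; exact f33.symm
          · show x 6 = x 34; exact f34.symm
          · show x 6 = x 35; exact f35.symm
          · show x 6 = x 36; exact f36.symm
          · show x 6 = x 37; exact f37.symm
          · show x 6 = x 38; exact f38.symm
          · show x 6 = x 39; exact f39.symm
          · show x 6 = x 40; exact f40.symm
          · show x 6 = x 41; exact f41.symm
          · show x 6 = x 42; exact f42.symm
          · show x 6 = x 43; exact f43.symm
          · show x 6 = x 44; exact f44.symm
        · rintro ⟨⟨a, b, c⟩, rfl⟩
          exact ⟨show a = 1 * a + (1 - 1) * c by ring,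
          show c = 1 * c + (1 - 1) * a by ring,
          show a = 1 * a + (1 - 1) * b by ring,
          show b = 1 * b + (1 - 1) * a by ring,
          show b = 1 * b + (1 - 1) * b by ring,
          show b = 1 * b + (1 - 1) * c by ring,
          show c = 1 * c + (1 - 1) * b by ring,
          show c = 1 * c + (1 - 1) * b by ring,
          show b = 1 * b + (1 - 1) * c by ring,
          show c = 1 * c + (1 - 1) * c by ring,
          show c = 1 * c + (1 - 1) * c by ring,
          show c = 1 * c + (1 - 1) * c by ring,
          show c = 1 * c + (1 - 1) * c by ring,
          show c = 1 * c + (1 - 1) * c by ring,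
          show c = 1 * c + (1 - 1) * c by ring,
          show c = 1 * c + (1 - 1) * c by ring,
          show c = 1 * c + (1 - 1) * c by ring,
          show c = 1 * c + (1 - 1) * c by ring,
          show c = 1 * c + (1 - 1) * c by ring,
          show c = 1 * c + (1 - 1) * c by ring,
          show c = 1 * c + (1 - 1) * c by ring,
          show c = 1 * c + (1 - 1) * c by ring,
          show c = 1 * c + (1 - 1) * c by ring,
          show c = 1 * c + (1 - 1) * c by ring,
          show c = 1 * c + (1 - 1) * c by ring,
          show c = 1 * c + (1 - 1) * c by ring,
          show c = 1 * c + (1 - 1) * c by ring,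
          show c = 1 * c + (1 - 1) * c by ring,
          show c = 1 * c + (1 - 1) * c by ring,
          show c = 1 * c + (1 - 1) * c by ring,
          show c = 1 * c + (1 - 1) * c by ring,
          show c = 1 * c + (1 - 1) * c by ring,
          show c = 1 * c + (1 - 1) * c by ring,
          show c = 1 * c + (1 - 1) * c by ring,
          show c = 1 * c + (1 - 1) * c by ring,
          show c = 1 * c + (1 - 1) * c by ring,
          show c = 1 * c + (1 - 1) * c by ring,
          show c = 1 * c + (1 - 1) * c by ring,
          show c = 1 * c + (1 - 1) * c by ring,
          show c = 1 * c + (1 - 1) * c by ring,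
          show c = 1 * c + (1 - 1) * c by ring,
          show c = 1 * c + (1 - 1) * c by ring,
          show c = 1 * c + (1 - 1) * c by ring,
          show c = 1 * c + (1 - 1) * c by ring,
          show c = 1 * c + (1 - 1) * c by ring⟩
      have hinj : Function.Injective (fun p : ZMod n × ZMod n × ZMod n => fun i : Fin 45 =>
          if (i : ℕ) < 2 then p.1 else if (i : ℕ) < 6 then p.2.1 else p.2.2) := by
        intro p q h
        have h0 : p.1 = q.1 := congrFun h 0
        have h2 : p.2.1 = q.2.1 := congrFun h 2
        have h6 : p.2.2 = q.2.2 := congrFun h 6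
        exact Prod.ext h0 (Prod.ext h2 h6)
      rw [hset, asw_ncard_range_eq _ hinj, Nat.card_prod, Nat.card_prod, Nat.card_zmod]
      ring
    refine ⟨hc4.trans hc45.symm, fun _ => hc4, ?_⟩
    rintro ⟨-, hv⟩
    have h0 : (0 : ZMod n) = 1 := isUnit_zero_iff.mp (by simpa using hv)
    have h1 : ((1 : ℕ) : ZMod n) = 0 := by rw [Nat.cast_one]; exact h0.symm
    have hn1 : n = 1 := Nat.dvd_one.mp ((ZMod.natCast_eq_zero_iff 1 n).mp h1)
    rw [hc4, hn1]
    norm_num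
  · -- case t, t - 1 units
    have hc4 : {x : Fin 4 → ZMod n | HopfSumSystem t x}.ncard = n := by
      have hset : {x : Fin 4 → ZMod n | HopfSumSystem t x}
          = Set.range (fun c : ZMod n => fun _ : Fin 4 => c) := by
        ext x
        simp only [Set.mem_setOf_eq, Set.mem_range, HopfSumSystem]
        constructor
        · rintro ⟨g1, g2, g3, g4⟩
          have e1 : x 1 = x 0 := sub_eq_zero.mp (asw_cancel hu hv 0 1
            (show (x 1 - x 0) * (t ^ 0 * (t - 1) ^ 1) = 0 by linear_combination (t - 1) * g1 + (t) * g3))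
          have e2 : x 2 = x 0 := sub_eq_zero.mp (asw_cancel hu hv 0 1
            (show (x 2 - x 0) * (t ^ 0 * (t - 1) ^ 1) = 0 by linear_combination (1) * g3))
          have e3 : x 3 = x 0 := sub_eq_zero.mp (asw_cancel hu hv 0 1
            (show (x 3 - x 0) * (t ^ 0 * (t - 1) ^ 1) = 0 by linear_combination (t) * g1 + (1) * g2 + (t + 1) * g3))
          refine ⟨x 0, funext fun i => ?_⟩
          fin_cases i
          exacts [rfl, e1.symm, e2.symm, e3.symm]
        · rintro ⟨c, rfl⟩
          have pf : (c : ZMod n) = t * c + (1 - t) * c := by ring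
          exact ⟨pf, pf, pf, pf⟩
      rw [hset, asw_ncard_range_eq _ fun a b h => congrFun h 0, Nat.card_zmod]
    have hc45 : {x : Fin 45 → ZMod n | AllenSwenbergSystem t x}.ncard = n := by
      have hset : {x : Fin 45 → ZMod n | AllenSwenbergSystem t x}
          = Set.range (fun c : ZMod n => fun _ : Fin 45 => c) := by
        ext x
        simp only [Set.mem_setOf_eq, Set.mem_range, AllenSwenbergSystem]
        constructor
        · rintro ⟨h1, h2, h3, h4, h5, h6, h7, h8, h9, h10, h11, h12, h13, h14, h15, h16, h17, h18, h19, h20, h21, h22, h23, h24, h25, h26, h27, h28, h29, h30, h31, h32, h33, h34, h35, h36, h37, h38, h39, h40, h41, h42, h43, h44, h45⟩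
          have E25 : (t - 1) * x 25 = (t) * x 0 + (-1) * x 1 := by linear_combination (1) * h1
          have E26 : t * (t - 1) * x 26 = (t ^ 2 - t + 1) * x 0 + (-1) * x 1 := by linear_combination (-t + 1) * h2 + (1) * E25
          have E2 : (t - 1) * x 2 = (-1) * x 0 + (t) * x 1 := by linear_combination (1) * h3
          have E3 : t * (t - 1) * x 3 = (t ^ 2 - 2 * t) * x 0 + (t) * x 1 := by linear_combination (-t + 1) * h4 + (1) * E2
          have E4 : t ^ 2 * (t - 1) * x 4 = (-t) * x 0 + (t ^ 3 - t ^ 2 + t) * x 1 := by linear_combination (-t ^ 2 + t) * h5 + (1) * E3 + (t ^ 2 - t) * E2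
          have E6 : t ^ 2 * (t - 1) ^ 2 * x 6 = (t) * x 0 + (-t ^ 3 + t ^ 2 - t) * x 1 + (t ^ 4 - t ^ 3) * x 5 := by linear_combination (t ^ 3 - t ^ 2) * h6 + (-1) * E4
          have E7 : t ^ 2 * (t - 1) ^ 2 * x 7 = (t ^ 2) * x 0 + (-t ^ 4 + t ^ 3 - t ^ 2) * x 1 + (2 * t ^ 4 - 3 * t ^ 3 + t ^ 2) * x 5 := by linear_combination (t ^ 4 - 2 * t ^ 3 + t ^ 2) * h7 + (t) * E6
          have E27 : (t - 1) ^ 2 * x 27 = (1) * x 0 + (-t) * x 1 + (t ^ 2 - t) * x 5 := by linear_combination (t - 1) * h9 + (-1) * E2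
          have E8 : t ^ 2 * (t - 1) ^ 2 * x 8 = (t ^ 3 - t ^ 2 + t) * x 0 + (-t ^ 5 + 2 * t ^ 4 - 3 * t ^ 3 + 2 * t ^ 2 - t) * x 1 + (t ^ 5 - t ^ 4) * x 5 := by linear_combination (t ^ 4 - 2 * t ^ 3 + t ^ 2) * h10 + (t) * E7 + (-t + 1) * E6
          have E9 : t ^ 3 * (t - 1) ^ 2 * x 9 = (t ^ 4 - 2 * t ^ 3 + 2 * t ^ 2) * x 0 + (-t ^ 6 + 3 * t ^ 5 - 5 * t ^ 4 + 4 * t ^ 3 - 2 * t ^ 2) * x 1 + (t ^ 6 - 2 * t ^ 5 + 2 * t ^ 4 - t ^ 3) * x 5 := by linear_combination (-t ^ 4 + 2 * t ^ 3 - t ^ 2) * h11 + (1) * E6 + (t - 1) * E8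
          have E10 : t ^ 3 * (t - 1) ^ 2 * x 10 = (2 * t ^ 4 - 3 * t ^ 3 + 2 * t ^ 2) * x 0 + (-2 * t ^ 6 + 5 * t ^ 5 - 7 * t ^ 4 + 5 * t ^ 3 - 2 * t ^ 2) * x 1 + (2 * t ^ 6 - 4 * t ^ 5 + 3 * t ^ 4 - t ^ 3) * x 5 := by linear_combination (t ^ 5 - 2 * t ^ 4 + t ^ 3) * h12 + (t ^ 2) * E8 + (-t + 1) * E9
          have E11 : t ^ 4 * (t - 1) ^ 2 * x 11 = (2 * t ^ 5 - 4 * t ^ 4 + 3 * t ^ 3) * x 0 + (-2 * t ^ 7 + 6 * t ^ 6 - 9 * t ^ 5 + 7 * t ^ 4 - 3 * t ^ 3) * x 1 + (2 * t ^ 7 - 5 * t ^ 6 + 5 * t ^ 5 - 2 * t ^ 4) * x 5 := by linear_combination (-t ^ 5 + 2 * t ^ 4 - t ^ 3) * h13 + (1) * E9 + (t - 1) * E10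
          have E12 : t ^ 4 * (t - 1) ^ 2 * x 12 = (3 * t ^ 5 - 5 * t ^ 4 + 3 * t ^ 3) * x 0 + (-3 * t ^ 7 + 8 * t ^ 6 - 11 * t ^ 5 + 8 * t ^ 4 - 3 * t ^ 3) * x 1 + (3 * t ^ 7 - 7 * t ^ 6 + 6 * t ^ 5 - 2 * t ^ 4) * x 5 := by linear_combination (t ^ 6 - 2 * t ^ 5 + t ^ 4) * h14 + (t ^ 2) * E10 + (-t + 1) * E11
          have E13 : t ^ 5 * (t - 1) ^ 2 * x 13 = (3 * t ^ 6 - 6 * t ^ 5 + 4 * t ^ 4) * x 0 + (-3 * t ^ 8 + 9 * t ^ 7 - 13 * t ^ 6 + 10 * t ^ 5 - 4 * t ^ 4) * x 1 + (3 * t ^ 8 - 8 * t ^ 7 + 8 * t ^ 6 - 3 * t ^ 5) * x 5 := by linear_combination (-t ^ 6 + 2 * t ^ 5 - t ^ 4) * h15 + (1) * E11 + (t - 1) * E12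
          have E28 : (t - 1) ^ 2 * x 28 = (t) * x 0 + (-t ^ 2) * x 1 + (2 * t ^ 2 - 3 * t + 1) * x 5 := by linear_combination (t ^ 2 - 2 * t + 1) * h8 + (t) * E27
          have E29 : (t - 1) ^ 2 * x 29 = (-t ^ 2 + 2 * t) * x 0 + (t ^ 3 - 2 * t ^ 2) * x 1 + (-t ^ 3 + 4 * t ^ 2 - 4 * t + 1) * x 5 := by linear_combination (t ^ 2 - 2 * t + 1) * h28 + (t) * E27 + (-t + 1) * E28
          have E30 : t * (t - 1) ^ 2 * x 30 = (-t ^ 3 + 3 * t ^ 2 - t) * x 0 + (t ^ 4 - 3 * t ^ 3 + t ^ 2) * x 1 + (-t ^ 4 + 5 * t ^ 3 - 6 * t ^ 2 + 2 * t) * x 5 := by linear_combination (-t ^ 2 + 2 * t - 1) * h29 + (1) * E28 + (t - 1) * E29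
          have E31 : t * (t - 1) ^ 2 * x 31 = (-2 * t ^ 3 + 4 * t ^ 2 - t) * x 0 + (2 * t ^ 4 - 4 * t ^ 3 + t ^ 2) * x 1 + (-2 * t ^ 4 + 7 * t ^ 3 - 7 * t ^ 2 + 2 * t) * x 5 := by linear_combination (t ^ 3 - 2 * t ^ 2 + t) * h30 + (t ^ 2) * E29 + (-t + 1) * E30
          have E32 : t ^ 2 * (t - 1) ^ 2 * x 32 = (-2 * t ^ 4 + 5 * t ^ 3 - 2 * t ^ 2) * x 0 + (2 * t ^ 5 - 5 * t ^ 4 + 2 * t ^ 3) * x 1 + (-2 * t ^ 5 + 8 * t ^ 4 - 9 * t ^ 3 + 3 * t ^ 2) * x 5 := by linear_combination (-t ^ 3 + 2 * t ^ 2 - t) * h31 + (1) * E30 + (t - 1) * E31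
          have E33 : t ^ 2 * (t - 1) ^ 2 * x 33 = (-3 * t ^ 4 + 6 * t ^ 3 - 2 * t ^ 2) * x 0 + (3 * t ^ 5 - 6 * t ^ 4 + 2 * t ^ 3) * x 1 + (-3 * t ^ 5 + 10 * t ^ 4 - 10 * t ^ 3 + 3 * t ^ 2) * x 5 := by linear_combination (t ^ 4 - 2 * t ^ 3 + t ^ 2) * h32 + (t ^ 2) * E31 + (-t + 1) * E32
          have E34 : t ^ 3 * (t - 1) ^ 2 * x 34 = (-3 * t ^ 5 + 7 * t ^ 4 - 3 * t ^ 3) * x 0 + (3 * t ^ 6 - 7 * t ^ 5 + 3 * t ^ 4) * x 1 + (-3 * t ^ 6 + 11 * t ^ 5 - 12 * t ^ 4 + 4 * t ^ 3) * x 5 := by linear_combination (-t ^ 4 + 2 * t ^ 3 - t ^ 2) * h33 + (1) * E32 + (t - 1) * E33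
          have E14 : t ^ 6 * (t - 1) ^ 2 * x 14 = (3 * t ^ 7 - 9 * t ^ 6 + 10 * t ^ 5 - 4 * t ^ 4) * x 0 + (-3 * t ^ 9 + 12 * t ^ 8 - 22 * t ^ 7 + 23 * t ^ 6 - 14 * t ^ 5 + 4 * t ^ 4) * x 1 + (3 * t ^ 9 - 11 * t ^ 8 + 16 * t ^ 7 - 11 * t ^ 6 + 3 * t ^ 5) * x 5 + (t ^ 7 - 2 * t ^ 6 + t ^ 5) * x 18 := by linear_combination (-t ^ 7 + 2 * t ^ 6 - t ^ 5) * h16 + (t - 1) * E13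
          have E21 : t ^ 6 * (t - 1) ^ 2 * x 21 = (-t ^ 7 + 2 * t ^ 6 - t ^ 5) * x 0 + (t ^ 9 - 3 * t ^ 8 + 4 * t ^ 7 - 3 * t ^ 6 + t ^ 5) * x 1 + (-t ^ 9 + 3 * t ^ 8 - 3 * t ^ 7 + t ^ 6) * x 5 + (t ^ 8 - 2 * t ^ 7 + t ^ 6) * x 18 := by linear_combination (t ^ 8 - 2 * t ^ 7 + t ^ 6) * h17 + (t) * E14 + (-t ^ 3 + t ^ 2) * E12
          have E17 : t ^ 7 * (t - 1) ^ 2 * x 17 = (-t ^ 8 + 3 * t ^ 7 - 3 * t ^ 6 + t ^ 5) * x 0 + (t ^ 10 - 4 * t ^ 9 + 7 * t ^ 8 - 7 * t ^ 7 + 4 * t ^ 6 - t ^ 5) * x 1 + (-t ^ 10 + 4 * t ^ 9 - 6 * t ^ 8 + 4 * t ^ 7 - t ^ 6) * x 5 + (t ^ 9 - 2 * t ^ 8 + t ^ 7) * x 18 := by linear_combination (-t ^ 8 + 2 * t ^ 7 - t ^ 6) * h23 + (t - 1) * E21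
          have E22 : t * (t - 1) * x 22 = (t) * x 0 + (-1) * x 1 + (t ^ 2 - 2 * t + 1) * x 18 := by linear_combination (-t + 1) * h26 + (1) * E25
          have E20 : t ^ 7 * (t - 1) ^ 3 * x 20 = (-t ^ 9 + 2 * t ^ 7 - 2 * t ^ 6) * x 0 + (t ^ 11 - t ^ 10 - t ^ 9 + 4 * t ^ 8 - 4 * t ^ 7 + 2 * t ^ 6) * x 1 + (-t ^ 11 + t ^ 10 + t ^ 9 - 2 * t ^ 8 + t ^ 7) * x 5 + (t ^ 10 - 2 * t ^ 9 + t ^ 8) * x 18 := by linear_combination (t ^ 9 - 2 * t ^ 8 + t ^ 7) * h21 + (t) * E17 + (-t ^ 3) * E12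
          have E19 : t ^ 7 * (t - 1) ^ 4 * x 19 = (t ^ 10 - t ^ 9 + t ^ 8 - 2 * t ^ 7 + 2 * t ^ 6) * x 0 + (-t ^ 11 + t ^ 10 - 2 * t ^ 8 + 3 * t ^ 7 - 2 * t ^ 6) * x 1 + (t ^ 11 - t ^ 10 - t ^ 9 + 2 * t ^ 8 - t ^ 7) * x 5 + (t ^ 11 - 5 * t ^ 10 + 8 * t ^ 9 - 5 * t ^ 8 + t ^ 7) * x 18 := by linear_combination (t ^ 10 - 3 * t ^ 9 + 3 * t ^ 8 - t ^ 7) * h24 + (t ^ 9 - 2 * t ^ 8 + t ^ 7) * E22 + (-1) * E20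
          have E23 : t ^ 8 * (t - 1) ^ 4 * x 23 = (t ^ 11 - 3 * t ^ 10 + 6 * t ^ 9 - 9 * t ^ 8 + 8 * t ^ 7 - 3 * t ^ 6) * x 0 + (-3 * t ^ 11 + 10 * t ^ 10 - 16 * t ^ 9 + 16 * t ^ 8 - 10 * t ^ 7 + 3 * t ^ 6) * x 1 + (3 * t ^ 11 - 10 * t ^ 10 + 13 * t ^ 9 - 8 * t ^ 8 + 2 * t ^ 7) * x 5 + (t ^ 12 - 5 * t ^ 11 + 9 * t ^ 10 - 7 * t ^ 9 + 2 * t ^ 8) * x 18 := by linear_combination (-t ^ 11 + 4 * t ^ 10 - 6 * t ^ 9 + 4 * t ^ 8 - t ^ 7) * h25 + (t ^ 3 - 2 * t ^ 2 + t) * E21 + (t - 1) * E19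
          have E24 : t ^ 8 * (t - 1) ^ 4 * x 24 = (t ^ 12 - 3 * t ^ 11 + 6 * t ^ 10 - 9 * t ^ 9 + 8 * t ^ 8 - 3 * t ^ 7) * x 0 + (-3 * t ^ 12 + 10 * t ^ 11 - 16 * t ^ 10 + 16 * t ^ 9 - 10 * t ^ 8 + 3 * t ^ 7) * x 1 + (3 * t ^ 12 - 10 * t ^ 11 + 13 * t ^ 10 - 8 * t ^ 9 + 2 * t ^ 8) * x 5 + (-t ^ 11 + 3 * t ^ 10 - 3 * t ^ 9 + t ^ 8) * x 18 := by linear_combination (t ^ 12 - 4 * t ^ 11 + 6 * t ^ 10 - 4 * t ^ 9 + t ^ 8) * h27 + (t) * E23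
          have E15 : t ^ 8 * (t - 1) ^ 4 * x 15 = (3 * t ^ 11 - 14 * t ^ 10 + 30 * t ^ 9 - 32 * t ^ 8 + 16 * t ^ 7 - 2 * t ^ 6) * x 0 + (-3 * t ^ 13 + 18 * t ^ 12 - 50 * t ^ 11 + 80 * t ^ 10 - 82 * t ^ 9 + 53 * t ^ 8 - 19 * t ^ 7 + 2 * t ^ 6) * x 1 + (3 * t ^ 13 - 17 * t ^ 12 + 42 * t ^ 11 - 55 * t ^ 10 + 40 * t ^ 9 - 15 * t ^ 8 + 2 * t ^ 7) * x 5 + (t ^ 11 - 5 * t ^ 10 + 8 * t ^ 9 - 5 * t ^ 8 + t ^ 7) * x 18 := by linear_combination (-t ^ 11 + 4 * t ^ 10 - 6 * t ^ 9 + 4 * t ^ 8 - t ^ 7) * h18 + (1) * E19 + (t ^ 5 - 3 * t ^ 4 + 3 * t ^ 3 - t ^ 2) * E13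
          have E16 : t ^ 8 * (t - 1) ^ 3 * x 16 = (-t ^ 10 + 4 * t ^ 9 - 7 * t ^ 8 + 6 * t ^ 7 - 2 * t ^ 6) * x 0 + (t ^ 12 - 5 * t ^ 11 + 12 * t ^ 10 - 17 * t ^ 9 + 15 * t ^ 8 - 8 * t ^ 7 + 2 * t ^ 6) * x 1 + (-t ^ 12 + 5 * t ^ 11 - 11 * t ^ 10 + 13 * t ^ 9 - 8 * t ^ 8 + 2 * t ^ 7) * x 5 + (t ^ 11 - 3 * t ^ 10 + 3 * t ^ 9 - t ^ 8) * x 18 := by linear_combination (-t ^ 10 + 3 * t ^ 9 - 3 * t ^ 8 + t ^ 7) * h20 + (t ^ 3 - t ^ 2) * E13 + (t - 1) * E20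
          have E39 : t ^ 3 * (t - 1) ^ 2 * x 39 = (3 * t ^ 6 - 10 * t ^ 5 + 10 * t ^ 4 - 3 * t ^ 3) * x 0 + (-3 * t ^ 7 + 10 * t ^ 6 - 10 * t ^ 5 + 3 * t ^ 4) * x 1 + (3 * t ^ 7 - 14 * t ^ 6 + 23 * t ^ 5 - 16 * t ^ 4 + 4 * t ^ 3) * x 5 + (t ^ 6 - 2 * t ^ 5 + t ^ 4) * x 35 := by linear_combination (t ^ 5 - 2 * t ^ 4 + t ^ 3) * h34 + (-t + 1) * E34
          have E37 : t ^ 2 * (t - 1) ^ 2 * x 37 = (3 * t ^ 5 - 9 * t ^ 4 + 8 * t ^ 3 - 2 * t ^ 2) * x 0 + (-3 * t ^ 6 + 9 * t ^ 5 - 8 * t ^ 4 + 2 * t ^ 3) * x 1 + (3 * t ^ 6 - 13 * t ^ 5 + 20 * t ^ 4 - 13 * t ^ 3 + 3 * t ^ 2) * x 5 + (t ^ 5 - 2 * t ^ 4 + t ^ 3) * x 35 := by linear_combination (t ^ 4 - 2 * t ^ 3 + t ^ 2) * h35 + (-t + 1) * E33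
          have E42 : t ^ 4 * (t - 1) ^ 2 * x 42 = (3 * t ^ 7 - 9 * t ^ 6 + 7 * t ^ 5 - t ^ 3) * x 0 + (-3 * t ^ 8 + 9 * t ^ 7 - 7 * t ^ 6 + t ^ 4) * x 1 + (3 * t ^ 8 - 13 * t ^ 7 + 19 * t ^ 6 - 10 * t ^ 5 + t ^ 3) * x 5 + (t ^ 7 - 2 * t ^ 6 + t ^ 5) * x 35 := by linear_combination (-t ^ 5 + 2 * t ^ 4 - t ^ 3) * h41 + (1) * E39 + (t ^ 2 - t) * E37
          have E43 : t ^ 9 * (t - 1) ^ 4 * x 43 = (3 * t ^ 14 - 19 * t ^ 13 + 50 * t ^ 12 - 69 * t ^ 11 + 55 * t ^ 10 - 28 * t ^ 9 + 11 * t ^ 8 - 3 * t ^ 7) * x 0 + (-3 * t ^ 15 + 19 * t ^ 14 - 49 * t ^ 13 + 63 * t ^ 12 - 39 * t ^ 11 + 3 * t ^ 10 + 13 * t ^ 9 - 10 * t ^ 8 + 3 * t ^ 7) * x 1 + (3 * t ^ 15 - 23 * t ^ 14 + 74 * t ^ 13 - 127 * t ^ 12 + 125 * t ^ 11 - 70 *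 t ^ 10 + 20 * t ^ 9 - 2 * t ^ 8) * x 5 + (-t ^ 11 + 3 * t ^ 10 - 3 * t ^ 9 + t ^ 8) * x 18 + (t ^ 14 - 5 * t ^ 13 + 10 * t ^ 12 - 10 * t ^ 11 + 5 * t ^ 10 - t ^ 9) * x 35 := by linear_combination (-t ^ 12 + 4 * t ^ 11 - 6 * t ^ 10 + 4 * t ^ 9 - t ^ 8) * h42 + (1) * E24 + (t ^ 8 - 3 * t ^ 7 + 3 * t ^ 6 - t ^ 5) * E39
          have E44 : t ^ 4 * (t - 1) ^ 2 * x 44 = (3 * t ^ 7 - 13 * t ^ 6 + 21 * t ^ 5 - 15 * t ^ 4 + 5 * t ^ 3 - t ^ 2) * x 0 + (-3 * t ^ 8 + 13 * t ^ 7 - 20 * t ^ 6 + 13 * t ^ 5 - 3 * t ^ 4 - t ^ 3 + t ^ 2) * x 1 + (3 * t ^ 8 - 17 * t ^ 7 + 37 * t ^ 6 - 39 * t ^ 5 + 20 * t ^ 4 - 4 * t ^ 3) * x 5 + (t ^ 7 - 3 * t ^ 6 + 3 * t ^ 5 - t ^ 4) * x 35 := by linear_combination (-t ^ 5 + 2 *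 t ^ 4 - t ^ 3) * h44 + (t ^ 3 - t ^ 2) * E26 + (t - 1) * E39
          have E40 : t ^ 4 * (t - 1) ^ 3 * x 40 = (3 * t ^ 8 - 16 * t ^ 7 + 30 * t ^ 6 - 23 * t ^ 5 + 7 * t ^ 4 - t ^ 3) * x 0 + (-3 * t ^ 9 + 16 * t ^ 8 - 29 * t ^ 7 + 21 * t ^ 6 - 5 * t ^ 5 - t ^ 4 + t ^ 3) * x 1 + (3 * t ^ 9 - 20 * t ^ 8 + 50 * t ^ 7 - 59 * t ^ 6 + 33 * t ^ 5 - 7 * t ^ 4) * x 5 + (t ^ 8 - 4 * t ^ 7 + 5 * t ^ 6 - 2 * t ^ 5) * x 35 := by linear_combination (t ^ 6 - 2 * t ^ 5 + t ^ 4) * h45 + (t) * E44 + (-t ^ 2) * E37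
          have E36 : t ^ 5 * (t - 1) ^ 3 * x 36 = (-3 * t ^ 7 + 10 * t ^ 6 - 10 * t ^ 5 + 4 * t ^ 4 - t ^ 3) * x 0 + (3 * t ^ 8 - 9 * t ^ 7 + 8 * t ^ 6 - 2 * t ^ 5 - t ^ 4 + t ^ 3) * x 1 + (-3 * t ^ 8 + 13 * t ^ 7 - 20 * t ^ 6 + 13 * t ^ 5 - 3 * t ^ 4) * x 5 + (t ^ 8 - 4 * t ^ 7 + 5 * t ^ 6 - 2 * t ^ 5) * x 35 := by linear_combination (-t ^ 7 + 3 * t ^ 6 - 3 * t ^ 5 + t ^ 4) * h36 + (1) * E40 + (t ^ 3 - 2 * t ^ 2 + t) * E34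
          have E38 : t ^ 5 * (t - 1) ^ 3 * x 38 = (3 * t ^ 9 - 15 * t ^ 8 + 27 * t ^ 7 - 20 * t ^ 6 + 6 * t ^ 5 - t ^ 4) * x 0 + (-3 * t ^ 10 + 15 * t ^ 9 - 26 * t ^ 8 + 18 * t ^ 7 - 4 * t ^ 6 - t ^ 5 + t ^ 4) * x 1 + (3 * t ^ 10 - 19 * t ^ 9 + 46 * t ^ 8 - 53 * t ^ 7 + 29 * t ^ 6 - 6 * t ^ 5) * x 5 + (t ^ 9 - 4 * t ^ 8 + 5 * t ^ 7 - 2 * t ^ 6) * x 35 := by linear_combination (t ^ 8 - 3 * t ^ 7 + 3 * t ^ 6 - t ^ 5) * h37 + (t) * E36 + (-t ^ 5 + 2 * t ^ 4 - t ^ 3) * E33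
          have E41 : t ^ 6 * (t - 1) ^ 3 * x 41 = (3 * t ^ 10 - 18 * t ^ 9 + 39 * t ^ 8 - 37 * t ^ 7 + 16 * t ^ 6 - 4 * t ^ 5 + t ^ 4) * x 0 + (-3 * t ^ 11 + 18 * t ^ 10 - 38 * t ^ 9 + 34 * t ^ 8 - 12 * t ^ 7 + 2 * t ^ 5 - t ^ 4) * x 1 + (3 * t ^ 11 - 22 * t ^ 10 + 62 * t ^ 9 - 85 * t ^ 8 + 59 * t ^ 7 - 19 * t ^ 6 + 2 * t ^ 5) * x 5 + (t ^ 10 - 5 * t ^ 9 + 9 * t ^ 8 - 7 * t ^ 7 + 2 * t ^ 6) * x 35 := by linear_combination (-t ^ 8 + 3 * t ^ 7 - 3 * t ^ 6 + t ^ 5) * h38 + (t ^ 3 - t ^ 2) * E34 + (t - 1) * E38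
          have R19 : (-t ^ 11 - 2 * t ^ 10 + 7 * t ^ 9 - 6 * t ^ 8 + t ^ 7) * x 0 + (4 * t ^ 12 - 12 * t ^ 11 + 19 * t ^ 10 - 17 * t ^ 9 + 8 * t ^ 8 - t ^ 7) * x 1 + (-4 * t ^ 12 + 11 * t ^ 11 - 12 * t ^ 10 + 6 * t ^ 9 - t ^ 8) * x 5 + (2 * t ^ 11 - 5 * t ^ 10 + 4 * t ^ 9 - t ^ 8) * x 18 = 0 := by linear_combination (t ^ 12 - 4 * t ^ 11 + 6 * t ^ 10 - 4 * t ^ 9 + t ^ 8) * h19 + (-t ^ 2 + t) * E20 + (t) * E15 + (-t ^ 7 + 3 * t ^ 6 - 3 * t ^ 5 + t ^ 4) * E12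
          have R22 : (t ^ 11 - 2 * t ^ 9 + t ^ 8 + t ^ 7) * x 0 + (-2 * t ^ 12 + 5 * t ^ 11 - 7 * t ^ 10 + 5 * t ^ 9 - t ^ 8 - t ^ 7) * x 1 + (2 * t ^ 12 - 5 * t ^ 11 + 5 * t ^ 10 - 2 * t ^ 9) * x 5 + (-t ^ 11 + 2 * t ^ 10 - t ^ 9) * x 18 = 0 := by linear_combination (t ^ 12 - 4 * t ^ 11 + 6 * t ^ 10 - 4 * t ^ 9 + t ^ 8) * h22 + (-t) * E19 + (t ^ 2 - t) * E16 + (-t ^ 5 + 3 * t ^ 4 - 3 * t ^ 3 + t ^ 2) * E21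
          have R39 : (-6 * t ^ 9 + 23 * t ^ 8 - 31 * t ^ 7 + 19 * t ^ 6 - 6 * t ^ 5 + t ^ 4) * x 0 + (6 * t ^ 10 - 22 * t ^ 9 + 28 * t ^ 8 - 15 * t ^ 7 + 2 * t ^ 6 + 2 * t ^ 5 - t ^ 4) * x 1 + (-6 * t ^ 10 + 30 * t ^ 9 - 57 * t ^ 8 + 52 * t ^ 7 - 23 * t ^ 6 + 4 * t ^ 5) * x 5 + (-2 * t ^ 9 + 6 * t ^ 8 - 6 * t ^ 7 + 2 * t ^ 6) * x 35 = 0 := by linear_combination (t ^ 8 - 3 * t ^ 7 + 3 * t ^ 6 - t ^ 5) * h39 + (-t ^ 4 + t ^ 3) * E33 + (t ^ 3 - t ^ 2) * E42 + (-t + 1) * E38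
          have R40 : (6 * t ^ 10 - 26 * t ^ 9 + 40 * t ^ 8 - 27 * t ^ 7 + 9 * t ^ 6 - 2 * t ^ 5) * x 0 + (-6 * t ^ 11 + 25 * t ^ 10 - 36 * t ^ 9 + 21 * t ^ 8 - 3 * t ^ 7 - 3 * t ^ 6 + 2 * t ^ 5) * x 1 + (6 * t ^ 11 - 33 * t ^ 10 + 69 * t ^ 9 - 69 * t ^ 8 + 33 * t ^ 7 - 6 * t ^ 6) * x 5 + (2 * t ^ 10 - 7 * t ^ 9 + 8 * t ^ 8 - 3 * t ^ 7) * x 35 = 0 := by linear_combination (t ^ 9 - 3 * t ^ 8 + 3 * t ^ 7 - t ^ 6) * h40 + (-t ^ 2) * E40 + (t) * E41 + (-t ^ 6 + 2 * t ^ 5 - t ^ 4) * E37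
          have R43 : (-3 * t ^ 13 + 12 * t ^ 12 - 19 * t ^ 11 + 16 * t ^ 10 - 9 * t ^ 9 + 3 * t ^ 8) * x 0 + (3 * t ^ 14 - 9 * t ^ 13 + 7 * t ^ 12 + 5 * t ^ 11 - 12 * t ^ 10 + 9 * t ^ 9 - 3 * t ^ 8) * x 1 + (-3 * t ^ 14 + 13 * t ^ 13 - 23 * t ^ 12 + 20 * t ^ 11 - 8 * t ^ 10 + t ^ 9) * x 5 + (t ^ 12 - 3 * t ^ 11 + 3 * t ^ 10 - t ^ 9) * x 18 + (-t ^ 13 + 3 * t ^ 12 - 3 * t ^ 11 + t ^ 10) * x 35 = 0 := by linear_combination (t ^ 13 - 4 * t ^ 12 + 6 * t ^ 11 - 4 * t ^ 10 + t ^ 9) * h43 + (-t ^ 5 + t ^ 4) * E38 + (t) * E43 + (-t ^ 7 + 2 * t ^ 6 - t ^ 5) * E40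
          have F1 : (x 1 - x 0) * (t ^ 8 * (t - 1) ^ 3) = 0 := by linear_combination (-t) * R19 + (-2 * t + 1) * R22 + (2 * t ^ 5 - 5 * t ^ 4 + 3 * t ^ 3) * R39 + (2 * t ^ 4 - 4 * t ^ 3 + 2 * t ^ 2) * R40
          have e1 : x 1 = x 0 := sub_eq_zero.mp (asw_cancel hu hv 8 3 F1)
          have F5 : (x 5 - x 0) * (t ^ 10 * (t - 1) ^ 4) = 0 := by linear_combination (-t ^ 3 + t ^ 2 - t) * R19 + (-2 * t ^ 3 + 3 * t ^ 2 - 3 * t + 1) * R22 + (2 * t ^ 5 - 5 * t ^ 4 + 3 * t ^ 3) * R39 + (2 * t ^ 4 - 4 * t ^ 3 + 2 * t ^ 2) * R40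
          have e5 : x 5 = x 0 := sub_eq_zero.mp (asw_cancel hu hv 10 4 F5)
          have F18 : (x 18 - x 0) * (t ^ 10 * (t - 1) ^ 3) = 0 := by linear_combination (2 * t ^ 4 - 3 * t ^ 3 + 4 * t ^ 2 - t) * R19 + (4 * t ^ 4 - 8 * t ^ 3 + 10 * t ^ 2 - 5 * t + 1) * R22 + (-4 * t ^ 8 + 12 * t ^ 7 - 17 * t ^ 6 + 18 * t ^ 5 - 11 * t ^ 4 + 3 * t ^ 3) * R39 + (-4 * t ^ 7 + 10 * t ^ 6 - 14 * t ^ 5 + 14 * t ^ 4 - 8 * t ^ 3 + 2 * t ^ 2) * R40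
          have e18 : x 18 = x 0 := sub_eq_zero.mp (asw_cancel hu hv 10 3 F18)
          have F35 : (x 35 - x 0) * (t ^ 11 * (t - 1) ^ 4) = 0 := by linear_combination (-3 * t ^ 6 + 8 * t ^ 5 - 10 * t ^ 4 + 11 * t ^ 3 - 7 * t ^ 2 + 2 * t) * R19 + (-6 * t ^ 6 + 19 * t ^ 5 - 28 * t ^ 4 + 32 * t ^ 3 - 25 * t ^ 2 + 11 * t - 2) * R22 + (6 * t ^ 10 - 25 * t ^ 9 + 36 * t ^ 8 - 27 * t ^ 7 + 30 * t ^ 6 - 39 * t ^ 5 + 25 * t ^ 4 - 6 * t ^ 3) * R39 + (6 * t ^ 9 - 22 * t ^ 8 + 28 * t ^ 7 - 21 * t ^ 6 + 26 * t ^ 5 - 31 * t ^ 4 + 18 * t ^ 3 - 4 * t ^ 2) * R40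
          have e35 : x 35 = x 0 := sub_eq_zero.mp (asw_cancel hu hv 11 4 F35)
          have K2 : (x 2 - x 0) * (t ^ 0 * (t - 1) ^ 1) = 0 := by linear_combination (1) * E2 + (t) * e1
          have e2 : x 2 = x 0 := sub_eq_zero.mp (asw_cancel hu hv 0 1 K2)
          have K3 : (x 3 - x 0) * (t ^ 1 * (t - 1) ^ 1) = 0 := by linear_combination (1) * E3 + (t) * e1
          have e3 : x 3 = x 0 := sub_eq_zero.mp (asw_cancel hu hv 1 1 K3)
          have K4 : (x 4 - x 0) * (t ^ 2 * (t - 1) ^ 1) = 0 := by linear_combination (1) * E4 + (t ^ 3 - t ^ 2 + t) * e1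
          have e4 : x 4 = x 0 := sub_eq_zero.mp (asw_cancel hu hv 2 1 K4)
          have K6 : (x 6 - x 0) * (t ^ 2 * (t - 1) ^ 2) = 0 := by linear_combination (1) * E6 + (t ^ 4 - t ^ 3) * e5 + (-t ^ 3 + t ^ 2 - t) * e1
          have e6 : x 6 = x 0 := sub_eq_zero.mp (asw_cancel hu hv 2 2 K6)
          have K7 : (x 7 - x 0) * (t ^ 2 * (t - 1) ^ 2) = 0 := by linear_combination (1) * E7 + (2 * t ^ 4 - 3 * t ^ 3 + t ^ 2) * e5 + (-t ^ 4 + t ^ 3 - t ^ 2) * e1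
          have e7 : x 7 = x 0 := sub_eq_zero.mp (asw_cancel hu hv 2 2 K7)
          have K8 : (x 8 - x 0) * (t ^ 2 * (t - 1) ^ 2) = 0 := by linear_combination (1) * E8 + (t ^ 5 - t ^ 4) * e5 + (-t ^ 5 + 2 * t ^ 4 - 3 * t ^ 3 + 2 * t ^ 2 - t) * e1
          have e8 : x 8 = x 0 := sub_eq_zero.mp (asw_cancel hu hv 2 2 K8)
          have K9 : (x 9 - x 0) * (t ^ 3 * (t - 1) ^ 2) = 0 := by linear_combination (1) * E9 + (t ^ 6 - 2 * t ^ 5 + 2 * t ^ 4 - t ^ 3) * e5 + (-t ^ 6 + 3 * t ^ 5 - 5 * t ^ 4 + 4 * t ^ 3 - 2 * t ^ 2) * e1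
          have e9 : x 9 = x 0 := sub_eq_zero.mp (asw_cancel hu hv 3 2 K9)
          have K10 : (x 10 - x 0) * (t ^ 3 * (t - 1) ^ 2) = 0 := by linear_combination (1) * E10 + (2 * t ^ 6 - 4 * t ^ 5 + 3 * t ^ 4 - t ^ 3) * e5 + (-2 * t ^ 6 + 5 * t ^ 5 - 7 * t ^ 4 + 5 * t ^ 3 - 2 * t ^ 2) * e1
          have e10 : x 10 = x 0 := sub_eq_zero.mp (asw_cancel hu hv 3 2 K10)
          have K11 : (x 11 - x 0) * (t ^ 4 * (t - 1) ^ 2) = 0 := by linear_combination (1) * E11 + (2 * t ^ 7 - 5 * t ^ 6 + 5 * t ^ 5 - 2 * t ^ 4) * e5 + (-2 * t ^ 7 + 6 * t ^ 6 - 9 * t ^ 5 + 7 * t ^ 4 - 3 * t ^ 3) * e1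
          have e11 : x 11 = x 0 := sub_eq_zero.mp (asw_cancel hu hv 4 2 K11)
          have K12 : (x 12 - x 0) * (t ^ 4 * (t - 1) ^ 2) = 0 := by linear_combination (1) * E12 + (3 * t ^ 7 - 7 * t ^ 6 + 6 * t ^ 5 - 2 * t ^ 4) * e5 + (-3 * t ^ 7 + 8 * t ^ 6 - 11 * t ^ 5 + 8 * t ^ 4 - 3 * t ^ 3) * e1
          have e12 : x 12 = x 0 := sub_eq_zero.mp (asw_cancel hu hv 4 2 K12)
          have K13 : (x 13 - x 0) * (t ^ 5 * (t - 1) ^ 2) = 0 := by linear_combination (1) * E13 + (3 * t ^ 8 - 8 * t ^ 7 + 8 * t ^ 6 - 3 * t ^ 5) * e5 + (-3 * t ^ 8 + 9 * t ^ 7 - 13 * t ^ 6 + 10 * t ^ 5 - 4 * t ^ 4) * e1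
          have e13 : x 13 = x 0 := sub_eq_zero.mp (asw_cancel hu hv 5 2 K13)
          have K14 : (x 14 - x 0) * (t ^ 6 * (t - 1) ^ 2) = 0 := by linear_combination (1) * E14 + (t ^ 7 - 2 * t ^ 6 + t ^ 5) * e18 + (3 * t ^ 9 - 11 * t ^ 8 + 16 * t ^ 7 - 11 * t ^ 6 + 3 * t ^ 5) * e5 + (-3 * t ^ 9 + 12 * t ^ 8 - 22 * t ^ 7 + 23 * t ^ 6 - 14 * t ^ 5 + 4 * t ^ 4) * e1
          have e14 : x 14 = x 0 := sub_eq_zero.mp (asw_cancel hu hv 6 2 K14)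
          have K15 : (x 15 - x 0) * (t ^ 8 * (t - 1) ^ 4) = 0 := by linear_combination (1) * E15 + (-3 * t ^ 13 + 18 * t ^ 12 - 50 * t ^ 11 + 80 * t ^ 10 - 82 * t ^ 9 + 53 * t ^ 8 - 19 * t ^ 7 + 2 * t ^ 6) * e1 + (t ^ 11 - 5 * t ^ 10 + 8 * t ^ 9 - 5 * t ^ 8 + t ^ 7) * e18 + (3 * t ^ 13 - 17 * t ^ 12 + 42 * t ^ 11 - 55 * t ^ 10 + 40 * t ^ 9 - 15 * t ^ 8 + 2 * t ^ 7) * e5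
          have e15 : x 15 = x 0 := sub_eq_zero.mp (asw_cancel hu hv 8 4 K15)
          have K16 : (x 16 - x 0) * (t ^ 8 * (t - 1) ^ 3) = 0 := by linear_combination (1) * E16 + (-t ^ 12 + 5 * t ^ 11 - 11 * t ^ 10 + 13 * t ^ 9 - 8 * t ^ 8 + 2 * t ^ 7) * e5 + (t ^ 12 - 5 * t ^ 11 + 12 * t ^ 10 - 17 * t ^ 9 + 15 * t ^ 8 - 8 * t ^ 7 + 2 * t ^ 6) * e1 + (t ^ 11 - 3 * t ^ 10 + 3 * t ^ 9 - t ^ 8) * e18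
          have e16 : x 16 = x 0 := sub_eq_zero.mp (asw_cancel hu hv 8 3 K16)
          have K17 : (x 17 - x 0) * (t ^ 7 * (t - 1) ^ 2) = 0 := by linear_combination (1) * E17 + (t ^ 9 - 2 * t ^ 8 + t ^ 7) * e18 + (-t ^ 10 + 4 * t ^ 9 - 6 * t ^ 8 + 4 * t ^ 7 - t ^ 6) * e5 + (t ^ 10 - 4 * t ^ 9 + 7 * t ^ 8 - 7 * t ^ 7 + 4 * t ^ 6 - t ^ 5) * e1
          have e17 : x 17 = x 0 := sub_eq_zero.mp (asw_cancel hu hv 7 2 K17)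
          have K19 : (x 19 - x 0) * (t ^ 7 * (t - 1) ^ 4) = 0 := by linear_combination (1) * E19 + (-t ^ 11 + t ^ 10 - 2 * t ^ 8 + 3 * t ^ 7 - 2 * t ^ 6) * e1 + (t ^ 11 - 5 * t ^ 10 + 8 * t ^ 9 - 5 * t ^ 8 + t ^ 7) * e18 + (t ^ 11 - t ^ 10 - t ^ 9 + 2 * t ^ 8 - t ^ 7) * e5
          have e19 : x 19 = x 0 := sub_eq_zero.mp (asw_cancel hu hv 7 4 K19)
          have K20 : (x 20 - x 0) * (t ^ 7 * (t - 1) ^ 3) = 0 := by linear_combination (1) * E20 + (t ^ 10 - 2 * t ^ 9 + t ^ 8) * e18 + (-t ^ 11 + t ^ 10 + t ^ 9 - 2 * t ^ 8 + t ^ 7) * e5 + (t ^ 11 - t ^ 10 - t ^ 9 + 4 * t ^ 8 - 4 * t ^ 7 + 2 * t ^ 6) * e1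
          have e20 : x 20 = x 0 := sub_eq_zero.mp (asw_cancel hu hv 7 3 K20)
          have K21 : (x 21 - x 0) * (t ^ 6 * (t - 1) ^ 2) = 0 := by linear_combination (1) * E21 + (t ^ 8 - 2 * t ^ 7 + t ^ 6) * e18 + (-t ^ 9 + 3 * t ^ 8 - 3 * t ^ 7 + t ^ 6) * e5 + (t ^ 9 - 3 * t ^ 8 + 4 * t ^ 7 - 3 * t ^ 6 + t ^ 5) * e1
          have e21 : x 21 = x 0 := sub_eq_zero.mp (asw_cancel hu hv 6 2 K21)
          have K22 : (x 22 - x 0) * (t ^ 1 * (t - 1) ^ 1) = 0 := by linear_combination (1) * E22 + (-1) * e1 + (t ^ 2 - 2 * t + 1) * e18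
          have e22 : x 22 = x 0 := sub_eq_zero.mp (asw_cancel hu hv 1 1 K22)
          have K23 : (x 23 - x 0) * (t ^ 8 * (t - 1) ^ 4) = 0 := by linear_combination (1) * E23 + (t ^ 12 - 5 * t ^ 11 + 9 * t ^ 10 - 7 * t ^ 9 + 2 * t ^ 8) * e18 + (3 * t ^ 11 - 10 * t ^ 10 + 13 * t ^ 9 - 8 * t ^ 8 + 2 * t ^ 7) * e5 + (-3 * t ^ 11 + 10 * t ^ 10 - 16 * t ^ 9 + 16 * t ^ 8 - 10 * t ^ 7 + 3 * t ^ 6) * e1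
          have e23 : x 23 = x 0 := sub_eq_zero.mp (asw_cancel hu hv 8 4 K23)
          have K24 : (x 24 - x 0) * (t ^ 8 * (t - 1) ^ 4) = 0 := by linear_combination (1) * E24 + (-t ^ 11 + 3 * t ^ 10 - 3 * t ^ 9 + t ^ 8) * e18 + (3 * t ^ 12 - 10 * t ^ 11 + 13 * t ^ 10 - 8 * t ^ 9 + 2 * t ^ 8) * e5 + (-3 * t ^ 12 + 10 * t ^ 11 - 16 * t ^ 10 + 16 * t ^ 9 - 10 * t ^ 8 + 3 * t ^ 7) * e1
          have e24 : x 24 = x 0 := sub_eq_zero.mp (asw_cancel hu hv 8 4 K24)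
          have K25 : (x 25 - x 0) * (t ^ 0 * (t - 1) ^ 1) = 0 := by linear_combination (1) * E25 + (-1) * e1
          have e25 : x 25 = x 0 := sub_eq_zero.mp (asw_cancel hu hv 0 1 K25)
          have K26 : (x 26 - x 0) * (t ^ 1 * (t - 1) ^ 1) = 0 := by linear_combination (1) * E26 + (-1) * e1
          have e26 : x 26 = x 0 := sub_eq_zero.mp (asw_cancel hu hv 1 1 K26)
          have K27 : (x 27 - x 0) * (t ^ 0 * (t - 1) ^ 2) = 0 := by linear_combination (1) * E27 + (t ^ 2 - t) * e5 + (-t) * e1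
          have e27 : x 27 = x 0 := sub_eq_zero.mp (asw_cancel hu hv 0 2 K27)
          have K28 : (x 28 - x 0) * (t ^ 0 * (t - 1) ^ 2) = 0 := by linear_combination (1) * E28 + (2 * t ^ 2 - 3 * t + 1) * e5 + (-t ^ 2) * e1
          have e28 : x 28 = x 0 := sub_eq_zero.mp (asw_cancel hu hv 0 2 K28)
          have K29 : (x 29 - x 0) * (t ^ 0 * (t - 1) ^ 2) = 0 := by linear_combination (1) * E29 + (-t ^ 3 + 4 * t ^ 2 - 4 * t + 1) * e5 + (t ^ 3 - 2 * t ^ 2) * e1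
          have e29 : x 29 = x 0 := sub_eq_zero.mp (asw_cancel hu hv 0 2 K29)
          have K30 : (x 30 - x 0) * (t ^ 1 * (t - 1) ^ 2) = 0 := by linear_combination (1) * E30 + (-t ^ 4 + 5 * t ^ 3 - 6 * t ^ 2 + 2 * t) * e5 + (t ^ 4 - 3 * t ^ 3 + t ^ 2) * e1
          have e30 : x 30 = x 0 := sub_eq_zero.mp (asw_cancel hu hv 1 2 K30)
          have K31 : (x 31 - x 0) * (t ^ 1 * (t - 1) ^ 2) = 0 := by linear_combination (1) * E31 + (-2 * t ^ 4 + 7 * t ^ 3 - 7 * t ^ 2 + 2 * t) * e5 + (2 * t ^ 4 - 4 * t ^ 3 + t ^ 2) * e1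
          have e31 : x 31 = x 0 := sub_eq_zero.mp (asw_cancel hu hv 1 2 K31)
          have K32 : (x 32 - x 0) * (t ^ 2 * (t - 1) ^ 2) = 0 := by linear_combination (1) * E32 + (-2 * t ^ 5 + 8 * t ^ 4 - 9 * t ^ 3 + 3 * t ^ 2) * e5 + (2 * t ^ 5 - 5 * t ^ 4 + 2 * t ^ 3) * e1
          have e32 : x 32 = x 0 := sub_eq_zero.mp (asw_cancel hu hv 2 2 K32)
          have K33 : (x 33 - x 0) * (t ^ 2 * (t - 1) ^ 2) = 0 := by linear_combination (1) * E33 + (-3 * t ^ 5 + 10 * t ^ 4 - 10 * t ^ 3 + 3 * t ^ 2) * e5 + (3 * t ^ 5 - 6 * t ^ 4 + 2 * t ^ 3) * e1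
          have e33 : x 33 = x 0 := sub_eq_zero.mp (asw_cancel hu hv 2 2 K33)
          have K34 : (x 34 - x 0) * (t ^ 3 * (t - 1) ^ 2) = 0 := by linear_combination (1) * E34 + (-3 * t ^ 6 + 11 * t ^ 5 - 12 * t ^ 4 + 4 * t ^ 3) * e5 + (3 * t ^ 6 - 7 * t ^ 5 + 3 * t ^ 4) * e1
          have e34 : x 34 = x 0 := sub_eq_zero.mp (asw_cancel hu hv 3 2 K34)
          have K36 : (x 36 - x 0) * (t ^ 5 * (t - 1) ^ 3) = 0 := by linear_combination (1) * E36 + (3 * t ^ 8 - 9 * t ^ 7 + 8 * t ^ 6 - 2 * t ^ 5 - t ^ 4 + t ^ 3) * e1 + (t ^ 8 - 4 * t ^ 7 + 5 * t ^ 6 - 2 * t ^ 5) * e35 + (-3 * t ^ 8 + 13 * t ^ 7 - 20 * t ^ 6 + 13 * t ^ 5 - 3 * t ^ 4) * e5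
          have e36 : x 36 = x 0 := sub_eq_zero.mp (asw_cancel hu hv 5 3 K36)
          have K37 : (x 37 - x 0) * (t ^ 2 * (t - 1) ^ 2) = 0 := by linear_combination (1) * E37 + (t ^ 5 - 2 * t ^ 4 + t ^ 3) * e35 + (3 * t ^ 6 - 13 * t ^ 5 + 20 * t ^ 4 - 13 * t ^ 3 + 3 * t ^ 2) * e5 + (-3 * t ^ 6 + 9 * t ^ 5 - 8 * t ^ 4 + 2 * t ^ 3) * e1
          have e37 : x 37 = x 0 := sub_eq_zero.mp (asw_cancel hu hv 2 2 K37)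
          have K38 : (x 38 - x 0) * (t ^ 5 * (t - 1) ^ 3) = 0 := by linear_combination (1) * E38 + (-3 * t ^ 10 + 15 * t ^ 9 - 26 * t ^ 8 + 18 * t ^ 7 - 4 * t ^ 6 - t ^ 5 + t ^ 4) * e1 + (t ^ 9 - 4 * t ^ 8 + 5 * t ^ 7 - 2 * t ^ 6) * e35 + (3 * t ^ 10 - 19 * t ^ 9 + 46 * t ^ 8 - 53 * t ^ 7 + 29 * t ^ 6 - 6 * t ^ 5) * e5
          have e38 : x 38 = x 0 := sub_eq_zero.mp (asw_cancel hu hv 5 3 K38)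
          have K39 : (x 39 - x 0) * (t ^ 3 * (t - 1) ^ 2) = 0 := by linear_combination (1) * E39 + (t ^ 6 - 2 * t ^ 5 + t ^ 4) * e35 + (3 * t ^ 7 - 14 * t ^ 6 + 23 * t ^ 5 - 16 * t ^ 4 + 4 * t ^ 3) * e5 + (-3 * t ^ 7 + 10 * t ^ 6 - 10 * t ^ 5 + 3 * t ^ 4) * e1
          have e39 : x 39 = x 0 := sub_eq_zero.mp (asw_cancel hu hv 3 2 K39)
          have K40 : (x 40 - x 0) * (t ^ 4 * (t - 1) ^ 3) = 0 := by linear_combination (1) * E40 + (-3 * t ^ 9 + 16 * t ^ 8 - 29 * t ^ 7 + 21 * t ^ 6 - 5 * t ^ 5 - t ^ 4 + t ^ 3) * e1 + (t ^ 8 - 4 * t ^ 7 + 5 * t ^ 6 - 2 * t ^ 5) * e35 + (3 * t ^ 9 - 20 * t ^ 8 + 50 * t ^ 7 - 59 * t ^ 6 + 33 * t ^ 5 - 7 * t ^ 4) * e5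
          have e40 : x 40 = x 0 := sub_eq_zero.mp (asw_cancel hu hv 4 3 K40)
          have K41 : (x 41 - x 0) * (t ^ 6 * (t - 1) ^ 3) = 0 := by linear_combination (1) * E41 + (3 * t ^ 11 - 22 * t ^ 10 + 62 * t ^ 9 - 85 * t ^ 8 + 59 * t ^ 7 - 19 * t ^ 6 + 2 * t ^ 5) * e5 + (-3 * t ^ 11 + 18 * t ^ 10 - 38 * t ^ 9 + 34 * t ^ 8 - 12 * t ^ 7 + 2 * t ^ 5 - t ^ 4) * e1 + (t ^ 10 - 5 * t ^ 9 + 9 * t ^ 8 - 7 * t ^ 7 + 2 * t ^ 6) * e35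
          have e41 : x 41 = x 0 := sub_eq_zero.mp (asw_cancel hu hv 6 3 K41)
          have K42 : (x 42 - x 0) * (t ^ 4 * (t - 1) ^ 2) = 0 := by linear_combination (1) * E42 + (t ^ 7 - 2 * t ^ 6 + t ^ 5) * e35 + (3 * t ^ 8 - 13 * t ^ 7 + 19 * t ^ 6 - 10 * t ^ 5 + t ^ 3) * e5 + (-3 * t ^ 8 + 9 * t ^ 7 - 7 * t ^ 6 + t ^ 4) * e1
          have e42 : x 42 = x 0 := sub_eq_zero.mp (asw_cancel hu hv 4 2 K42)
          have K43 : (x 43 - x 0) * (t ^ 9 * (t - 1) ^ 4) = 0 := by linear_combination (1) * E43 + (-t ^ 11 + 3 * t ^ 10 - 3 * t ^ 9 + t ^ 8) * e18 + (3 * t ^ 15 - 23 * t ^ 14 + 74 * t ^ 13 - 127 * t ^ 12 + 125 * t ^ 11 - 70 * t ^ 10 + 20 * t ^ 9 - 2 * t ^ 8) * e5 + (-3 * t ^ 15 + 19 * t ^ 14 - 49 * t ^ 13 + 63 * t ^ 12 - 39 * t ^ 11 + 3 * t ^ 10 + 13 * t ^ 9 - 10 * t ^ 8 + 3 * t ^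 7) * e1 + (t ^ 14 - 5 * t ^ 13 + 10 * t ^ 12 - 10 * t ^ 11 + 5 * t ^ 10 - t ^ 9) * e35
          have e43 : x 43 = x 0 := sub_eq_zero.mp (asw_cancel hu hv 9 4 K43)
          have K44 : (x 44 - x 0) * (t ^ 4 * (t - 1) ^ 2) = 0 := by linear_combination (1) * E44 + (-3 * t ^ 8 + 13 * t ^ 7 - 20 * t ^ 6 + 13 * t ^ 5 - 3 * t ^ 4 - t ^ 3 + t ^ 2) * e1 + (t ^ 7 - 3 * t ^ 6 + 3 * t ^ 5 - t ^ 4) * e35 + (3 * t ^ 8 - 17 * t ^ 7 + 37 * t ^ 6 - 39 * t ^ 5 + 20 * t ^ 4 - 4 * t ^ 3) * e5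
          have e44 : x 44 = x 0 := sub_eq_zero.mp (asw_cancel hu hv 4 2 K44)
          refine ⟨x 0, funext fun i => ?_⟩
          fin_cases i
          exacts [rfl, e1.symm, e2.symm, e3.symm, e4.symm, e5.symm, e6.symm, e7.symm, e8.symm, e9.symm, e10.symm, e11.symm, e12.symm, e13.symm, e14.symm, e15.symm, e16.symm, e17.symm, e18.symm, e19.symm, e20.symm, e21.symm, e22.symm, e23.symm, e24.symm, e25.symm, e26.symm, e27.symm, e28.symm, e29.symm, e30.symm, e31.symm, e32.symm, e33.symm, e34.symm, e35.symm, e36.symm, e37.symm, e38.symm, e39.symm, e40.symm, e41.symm, e42.symm, e43.symm, e44.symm]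
        · rintro ⟨c, rfl⟩
          have pf : (c : ZMod n) = t * c + (1 - t) * c := by ring
          exact ⟨pf, pf, pf, pf, pf, pf, pf, pf, pf, pf, pf, pf, pf, pf, pf, pf, pf, pf, pf, pf, pf, pf, pf, pf, pf, pf, pf, pf, pf, pf, pf, pf, pf, pf, pf, pf, pf, pf, pf, pf, pf, pf, pf, pf, pf⟩
      rw [hset, asw_ncard_range_eq _ fun a b h => congrFun h 0, Nat.card_zmod]
    refine ⟨hc4.trans hc45.symm, ?_, fun _ => hc4⟩
    rintro rfl
    have h0 : (0 : ZMod n) = 1 := isUnit_zero_iff.mp (by simpa using hv)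
    have h1 : ((1 : ℕ) : ZMod n) = 0 := by rw [Nat.cast_one]; exact h0.symm
    have hn1 : n = 1 := Nat.dvd_one.mp ((ZMod.natCast_eq_zero_iff 1 n).mp h1)
    rw [hc4, hn1]
    norm_num
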